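/- Let E ∈ 𝓛 have arity n, and suppose 0 < ε < 1/4 and 1 ≤ ℓ ≤ n. Let A_0, …, A_{ℓ−1} ∈ M̂∖M be (ε,ℓ,E)-good sets, and let A_ℓ, …, A_{n−1} ∈ M. Then for any two injective functions β_0, β_1 : {0,…,ℓ−1} → {0,…,ℓ−1} and any permutation σ of {0,…,n−1}, Ê^{σ∘β_0}_ε(A_{σ(0)}, …, A_{σ(n−1)}) = Ê^{σ∘β_1}_ε(A_{σ(0)}, …, A_{σ(n−1)}) ∈ {⊤,⊥}. -/

import Mathlib

open scoped Classical

noncomputable section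

/-- Truth values: true, false, and indeterminate. -/
inductive TV where
  | top : TV
  | bot : TV
  | up  : TV
deriving DecidableEq

/-- A finite relational language. -/
structure RelLanguage where
  Symb : Type
  [fintypeSymb : Fintype Symb]
  arity : Symb → ℕ

attribute [instance] RelLanguage.fintypeSymb

/-- `q_𝓛`, the maximal arity of a relation symbol. -/
def RelLanguage.q (L : RelLanguage) : ℕ := Finset.univ.sup L.arity

/-- `n_𝓛 = |𝓛| ⬝ q_𝓛`. -/
def RelLanguage.nL (L : RelLanguage) : ℕ := Fintype.card L.Symb * L.q

/-- A structure for a finite relational language, on underlying set `M`. -/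
structure RelStructure (L : RelLanguage) (M : Type*) where
  rel : ∀ E : L.Symb, (Fin (L.arity E) → M) → Bool

/-- `M̂ = M ∪ 𝒫(M)`: an argument is either an element of `M` or a subset of `M`. -/
abbrev Arg (M : Type*) := M ⊕ Finset M

/-- Membership of an element in an argument: equality for elements, membership for sets. -/
def Arg.mem {M : Type*} (a : M) : Arg M → Prop
  | Sum.inl b => a = b
  | Sum.inr s => a ∈ s

/-- The size of an argument: `1` for an element, the cardinality for a set. -/
def Arg.size {M : Type*} : Arg M → ℕ
  | Sum.inl _ => 1
  | Sum.inr s => s.card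

variable {M : Type*} [Fintype M] [DecidableEq M]

/-- The ε-partial relation `Ê^m̄_ε`, where the list of indices is given in
*polling order*: the head of the list is the index polled first (outermost),
i.e. the list is the *reverse* of the tuple `m̄` of the paper. -/
def pollAux (ε : ℝ) {n : ℕ} (R : (Fin n → M) → Bool) :
    List (Fin n) → (Fin n → Arg M) → TV
  | [], A =>
      if h : ∃ f : Fin n → M, ∀ i, A i = Sum.inl (f i) then
        (if R (Classical.choose h) then TV.top else TV.bot)
      else TV.up
  | j :: rest, A =>
      match A j with
      | Sum.inl _ => TV.up
      | Sum.inr Aj =>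
          if (((Aj.filter fun a =>
                pollAux ε R rest (Function.update A j (Sum.inl a)) = TV.top).card : ℝ)
              > (1 - ε) * (Aj.card : ℝ)) then TV.top
          else if (((Aj.filter fun a =>
                pollAux ε R rest (Function.update A j (Sum.inl a)) = TV.bot).card : ℝ)
              > (1 - ε) * (Aj.card : ℝ)) then TV.bot
          else TV.up

/-- The ε-partial relation `Ê^m̄_ε`, with `m̄` given in the paper's order
(the *last* entry of `m̄` is the index polled first). -/
def partialRel (ε : ℝ) {n : ℕ} (R : (Fin n → M) → Bool)
    (mbar : List (Fin n)) (A : Fin n → Arg M) : TV :=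
  pollAux ε R mbar.reverse A

/-- The value `Ê^{⟨σ⁻¹(l-1),…,σ⁻¹(1),σ⁻¹(0)⟩}_ε (A_{σ(0)}, …, A_{σ(n-1)})`. -/
def pollValue (ε : ℝ) {n : ℕ} (R : (Fin n → M) → Bool) (l : ℕ)
    (σ : Equiv.Perm (Fin n)) (A : Fin n → Arg M) : TV :=
  pollAux ε R (((List.finRange n).take l).map σ.symm) fun i => A (σ i)

/-- `(ε, ℓ, E)`-goodness of an argument, for the relation `R` interpreting `E`. -/
def IsGood (ε : ℝ) {n : ℕ} (R : (Fin n → M) → Bool) : ℕ → Arg M → Prop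
  | 0, A₀ => A₀.isLeft = true
  | (m+1), A₀ =>
      (∀ k, 1 ≤ k → k < m + 1 → IsGood ε R k A₀) ∧
      (∀ (A : Fin n → Arg M) (σ : Equiv.Perm (Fin n)),
        (∀ i : Fin n, (i : ℕ) = 0 → A i = A₀) →
        (∀ i : Fin n, 1 ≤ (i : ℕ) → (i : ℕ) < m + 1 →
            (A i).isRight = true ∧ IsGood ε R (m + 1 - (i : ℕ)) (A i)) →
        (∀ i : Fin n, m + 1 ≤ (i : ℕ) → (A i).isLeft = true) →
        pollValue ε R (m + 1) σ A ≠ TV.up)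
  termination_by l _ => l
  decreasing_by all_goals omega

/-- `A` is ε-excellent: `(ε, arity(E), E)`-good for every relation symbol `E`. -/
def IsExcellent (ε : ℝ) {L : RelLanguage} (𝓜 : RelStructure L M) (A : Arg M) : Prop :=
  ∀ E : L.Symb, IsGood ε (𝓜.rel E) (L.arity E) A

/-- `P` is a partition of the finite set `S`. -/
def IsPartition {V : Type*} [DecidableEq V] (P : Finset (Finset V)) (S : Finset V) : Prop :=
  (∀ p ∈ P, p.Nonempty) ∧
  (∀ p ∈ P, ∀ q ∈ P, p ≠ q → Disjoint p q) ∧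
  (∀ x, x ∈ S ↔ ∃ p ∈ P, x ∈ p)

/-- A partition is equitable when any two parts differ in size by at most 1. -/
def IsEquitable {V : Type*} (P : Finset (Finset V)) : Prop :=
  ∀ p ∈ P, ∀ q ∈ P, p.card ≤ q.card + 1

/-- Indivisibility of a partition with respect to a single relation. -/
def IndivisibleRel {n : ℕ} (P : Finset (Finset M)) (R : (Fin n → M) → Bool) : Prop :=
  ∀ p : Fin n → Finset M, (∀ i, p i ∈ P) →
    ∀ a b : Fin n → M, (∀ i, a i ∈ p i) → (∀ i, b i ∈ p i) → R a = R b

/-- Indivisibility of a partition with respect to a structure. -/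
def Indivisible {L : RelLanguage} (P : Finset (Finset M)) (𝓝 : RelStructure L M) : Prop :=
  ∀ E : L.Symb, IndivisibleRel P (𝓝.rel E)

/-- The τ-branching property for an `n`-ary relation `R` with the variable partition
`(x_ℓ; the remaining variables)`. -/
def RelBranching {n : ℕ} (R : (Fin n → M) → Bool) (ℓ : Fin n) (τ : ℕ) : Prop :=
  ∃ (a : List Bool → M) (b : List Bool → (Fin n → M)),
    ∀ i : List Bool, i.length = τ →
      ∀ j : List Bool, j.length < τ → ∀ h : Bool,
        (j ++ [h]) <+: i → (R (Function.update (b j) ℓ (a i)) = h)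

/-- `𝓜` does not have the τ-branching property (for any relation symbol and
any singleton variable partition). -/
def NonBranching {L : RelLanguage} (𝓜 : RelStructure L M) (τ : ℕ) : Prop :=
  ∀ (E : L.Symb) (j : Fin (L.arity E)), ¬ RelBranching (𝓜.rel E) j τ

/-- `g = ⌈5 ⬝ n_𝓛 ⬝ τ̂ ⬝ log₂ τ̂⌉`. -/
def gBound (L : RelLanguage) (τ : ℕ) : ℕ :=
  ⌈5 * (L.nL : ℝ) * (τ : ℝ) * Real.logb 2 (τ : ℝ)⌉₊

/-- A staircase `⟨m_j⟩_{j ≤ k}`. -/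
def Staircase (ε : ℝ) (ms : ℕ → ℕ) (k : ℕ) : Prop :=
  (∀ j ≤ k, 0 < ms j) ∧ ∀ j < k, (ms (j + 1) : ℝ) ≤ ε * (ms j : ℝ)

end

section AuxLemmas

variable {M : Type} [Fintype M] [DecidableEq M] {n : ℕ}

lemma count_lemma (ε : ℝ) (hε1 : ε < 1) (R : (Fin n → M) → Bool)
    (j k : Fin n) (hjk : j ≠ k) (rest : List (Fin n)) (B : Fin n → Arg M)
    (Bj Bk : Finset M) (hBj : B j = Sum.inr Bj) (hBk : B k = Sum.inr Bk)
    (δ : TV) (hδ : δ ≠ TV.up)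
    (h : pollAux ε R (j :: k :: rest) B = δ) :
    (1 - ε) ^ 2 * Bj.card * Bk.card <
      ∑ b ∈ Bj, (((Bk.filter fun c =>
        pollAux ε R rest
          (Function.update (Function.update B j (Sum.inl b)) k (Sum.inl c)) = δ).card : ℝ)) := by
  rw [pollAux, hBj] at h
  dsimp only at h
  set G := Bj.filter fun b =>
      pollAux ε R (k :: rest) (Function.update B j (Sum.inl b)) = δ with hGdef
  have hG : (1 - ε) * Bj.card < (G.card : ℝ) := by
    split_ifs at h with h1 h2
    · subst h; exact h1
    · subst h; exact h2
    · exact absurd h.symm hδ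
  have key : ∀ b ∈ G, (1 - ε) * Bk.card <
      (((Bk.filter fun c => pollAux ε R rest
        (Function.update (Function.update B j (Sum.inl b)) k (Sum.inl c)) = δ).card : ℝ)) := by
    intro b hb
    have hb' := (Finset.mem_filter.mp hb).2
    rw [pollAux, Function.update_of_ne (Ne.symm hjk), hBk] at hb'
    dsimp only at hb'
    split_ifs at hb' with h1 h2
    · subst hb'; exact h1
    · subst hb'; exact h2
    · exact absurd hb'.symm hδ
  have hGne : G.Nonempty := by
    rcases G.eq_empty_or_nonempty with h0 | hne
    · rw [h0] at hG
      simp only [Finset.card_empty, Nat.cast_zero] at hG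
      nlinarith [Nat.cast_nonneg (α := ℝ) Bj.card]
    · exact hne
  have hsum2 : (G.card : ℝ) * ((1 - ε) * Bk.card) < ∑ b ∈ G,
      (((Bk.filter fun c => pollAux ε R rest
        (Function.update (Function.update B j (Sum.inl b)) k (Sum.inl c)) = δ).card : ℝ)) := by
    have h2 := Finset.sum_lt_sum_of_nonempty hGne key
    simpa [Finset.sum_const, nsmul_eq_mul, mul_comm, mul_assoc] using h2
  have hsum1 : ∑ b ∈ G, (((Bk.filter fun c => pollAux ε R rest
        (Function.update (Function.update B j (Sum.inl b)) k (Sum.inl c)) = δ).card : ℝ)) ≤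
      ∑ b ∈ Bj, (((Bk.filter fun c => pollAux ε R rest
        (Function.update (Function.update B j (Sum.inl b)) k (Sum.inl c)) = δ).card : ℝ)) :=
    Finset.sum_le_sum_of_subset_of_nonneg (Finset.filter_subset _ _)
      (fun _ _ _ => Nat.cast_nonneg _)
  have hX : (0:ℝ) ≤ (1 - ε) * Bk.card :=
    mul_nonneg (by linarith) (Nat.cast_nonneg _)
  have h3 : ((1 - ε) * Bj.card) * ((1 - ε) * Bk.card) ≤ (G.card : ℝ) * ((1 - ε) * Bk.card) :=
    mul_le_mul_of_nonneg_right hG.le hX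
  have h4 : (1 - ε) ^ 2 * Bj.card * Bk.card
      = ((1 - ε) * (Bj.card:ℝ)) * ((1 - ε) * (Bk.card:ℝ)) := by ring
  linarith [hsum1, hsum2, h3, h4]
lemma no_conflict (ε : ℝ) (hε0 : 0 < ε) (hε : ε < 1/4) (R : (Fin n → M) → Bool)
    (j k : Fin n) (hjk : j ≠ k) (rest : List (Fin n)) (B : Fin n → Arg M)
    (htop : pollAux ε R (j :: k :: rest) B = TV.top)
    (hbot : pollAux ε R (k :: j :: rest) B = TV.bot) : False := by
  obtain ⟨Bj, hBj⟩ : ∃ s, B j = Sum.inr s := by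
    rcases hb : B j with a | s
    · rw [pollAux, hb] at htop; exact absurd htop (by dsimp only; simp)
    · exact ⟨s, rfl⟩
  obtain ⟨Bk, hBk⟩ : ∃ s, B k = Sum.inr s := by
    rcases hb : B k with a | s
    · rw [pollAux, hb] at hbot; exact absurd hbot (by dsimp only; simp)
    · exact ⟨s, rfl⟩
  have c1 := count_lemma ε (by linarith) R j k hjk rest B Bj Bk hBj hBk TV.top
    (by simp) htop
  have c2 := count_lemma ε (by linarith) R k j hjk.symm rest B Bk Bj hBk hBj TV.bot
    (by simp) hbot
  simp only [Function.update_comm hjk.symm] at c2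
  -- double counting bound in ℕ
  have key : (∑ b ∈ Bj, ((Bk.filter fun c => pollAux ε R rest
        (Function.update (Function.update B j (Sum.inl b)) k (Sum.inl c)) = TV.top).card)) +
      (∑ c ∈ Bk, ((Bj.filter fun b => pollAux ε R rest
        (Function.update (Function.update B j (Sum.inl b)) k (Sum.inl c)) = TV.bot).card)) ≤
      Bj.card * Bk.card := by
    have e1 : ∀ b ∈ Bj, ((Bk.filter fun c => pollAux ε R rest
        (Function.update (Function.update B j (Sum.inl b)) k (Sum.inl c)) = TV.top).card)
        = ∑ c ∈ Bk, (if pollAux ε R rest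
        (Function.update (Function.update B j (Sum.inl b)) k (Sum.inl c)) = TV.top then 1 else 0) := by
      intro b _; rw [Finset.card_filter]
    have e2 : (∑ c ∈ Bk, ((Bj.filter fun b => pollAux ε R rest
        (Function.update (Function.update B j (Sum.inl b)) k (Sum.inl c)) = TV.bot).card))
        = ∑ b ∈ Bj, ∑ c ∈ Bk, (if pollAux ε R rest
        (Function.update (Function.update B j (Sum.inl b)) k (Sum.inl c)) = TV.bot then 1 else 0) := by
      rw [Finset.sum_comm]
      exact Finset.sum_congr rfl (fun c _ => by rw [Finset.card_filter])
    rw [Finset.sum_congr rfl e1, e2, ← Finset.sum_add_distrib]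
    calc ∑ b ∈ Bj, ((∑ c ∈ Bk, (if pollAux ε R rest
        (Function.update (Function.update B j (Sum.inl b)) k (Sum.inl c)) = TV.top then 1 else 0)) +
        (∑ c ∈ Bk, (if pollAux ε R rest
        (Function.update (Function.update B j (Sum.inl b)) k (Sum.inl c)) = TV.bot then 1 else 0)))
        = ∑ b ∈ Bj, ∑ c ∈ Bk, ((if pollAux ε R rest
        (Function.update (Function.update B j (Sum.inl b)) k (Sum.inl c)) = TV.top then 1 else 0) +
        (if pollAux ε R rest
        (Function.update (Function.update B j (Sum.inl b)) k (Sum.inl c)) = TV.bot then 1 else 0)) := by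
          exact Finset.sum_congr rfl (fun b _ => (Finset.sum_add_distrib).symm)
      _ ≤ ∑ b ∈ Bj, ∑ c ∈ Bk, 1 := by
          refine Finset.sum_le_sum (fun b _ => Finset.sum_le_sum (fun c _ => ?_))
          rcases hv : pollAux ε R rest
            (Function.update (Function.update B j (Sum.inl b)) k (Sum.inl c)) <;> simp [hv]
      _ = Bj.card * Bk.card := by simp [mul_comm]
  have keyR : (∑ b ∈ Bj, (((Bk.filter fun c => pollAux ε R rest
        (Function.update (Function.update B j (Sum.inl b)) k (Sum.inl c)) = TV.top).card : ℝ))) +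
      (∑ c ∈ Bk, (((Bj.filter fun b => pollAux ε R rest
        (Function.update (Function.update B j (Sum.inl b)) k (Sum.inl c)) = TV.bot).card : ℝ))) ≤
      (Bj.card : ℝ) * Bk.card := by
    have := key
    exact_mod_cast this
  have hNN : (0:ℝ) ≤ (Bj.card : ℝ) * Bk.card :=
    mul_nonneg (Nat.cast_nonneg _) (Nat.cast_nonneg _)
  have hm1 : ε * ((Bj.card:ℝ) * Bk.card) ≤ (1/4) * ((Bj.card:ℝ) * Bk.card) :=
    mul_le_mul_of_nonneg_right hε.le hNN
  have hm2 : (0:ℝ) ≤ (ε * ε) * ((Bj.card:ℝ) * Bk.card) :=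
    mul_nonneg (mul_self_nonneg ε) hNN
  nlinarith [c1, c2, keyR, hNN, hm1, hm2]
lemma swap_lemma (ε : ℝ) (hε0 : 0 < ε) (hε : ε < 1/4) (R : (Fin n → M) → Bool)
    (j k : Fin n) (hjk : j ≠ k) (rest : List (Fin n)) (B : Fin n → Arg M)
    (h1 : pollAux ε R (j :: k :: rest) B ≠ TV.up)
    (h2 : pollAux ε R (k :: j :: rest) B ≠ TV.up) :
    pollAux ε R (j :: k :: rest) B = pollAux ε R (k :: j :: rest) B := by
  rcases p1 : pollAux ε R (j :: k :: rest) B with _ | _ | _ <;>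
    rcases p2 : pollAux ε R (k :: j :: rest) B with _ | _ | _
  · rfl
  · exact absurd (no_conflict ε hε0 hε R j k hjk rest B p1 p2) not_false
  · exact absurd p2 h2
  · exact absurd (no_conflict ε hε0 hε R k j hjk.symm rest B p2 p1) not_false
  · rfl
  · exact absurd p2 h2
  all_goals exact absurd p1 h1

lemma isGood_mono (ε : ℝ) (R : (Fin n → M) → Bool) {m k : ℕ} (A : Arg M)
    (h1 : 1 ≤ k) (hk : k ≤ m + 1) (h : IsGood ε R (m + 1) A) : IsGood ε R k A := by
  rcases eq_or_lt_of_le hk with rfl | hlt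
  · exact h
  · rw [IsGood] at h
    exact h.1 k h1 hlt

lemma exists_perm (l : List (Fin n)) (hnd : l.Nodup) :
    ∃ τ : Equiv.Perm (Fin n),
      (∀ (i : Fin n) (h : (i : ℕ) < l.length), τ.symm i = l.get ⟨i, h⟩) ∧
      (∀ i : Fin n, l.length ≤ (i : ℕ) → τ.symm i ∉ l) := by
  classical
  set L := l ++ (List.finRange n).filter (fun x => decide (x ∉ l)) with hLdef
  have hdisj : List.Disjoint l ((List.finRange n).filter (fun x => decide (x ∉ l))) := by
    intro x hx hxf
    exact absurd hx (of_decide_eq_true (List.mem_filter.mp hxf).2)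
  have hLnd : L.Nodup :=
    List.Nodup.append hnd ((List.nodup_finRange n).filter _) hdisj
  have hLmem : ∀ x : Fin n, x ∈ L := by
    intro x
    by_cases hx : x ∈ l
    · exact List.mem_append_left _ hx
    · exact List.mem_append_right _
        (List.mem_filter.mpr ⟨List.mem_finRange x, decide_eq_true hx⟩)
  have hLlen : L.length = n := by
    have h1 : L.toFinset = Finset.univ := Finset.eq_univ_iff_forall.mpr
      (fun x => List.mem_toFinset.mpr (hLmem x))
    have h2 := List.toFinset_card_of_nodup hLnd
    rw [h1] at h2
    simp at h2
    omega
  have hinj : Function.Injective (fun i : Fin n => L.get (Fin.cast hLlen.symm i)) := by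
    intro a b hab
    have := (List.nodup_iff_injective_get.mp hLnd) hab
    exact Fin.ext (by simpa using congrArg Fin.val this)
  let τ0 : Fin n ≃ Fin n := Equiv.ofBijective _ (Finite.injective_iff_bijective.mp hinj)
  refine ⟨τ0.symm, ?_, ?_⟩
  · intro i h
    show τ0 i = _
    have hget : τ0 i = L.get (Fin.cast hLlen.symm i) := rfl
    rw [hget]
    have : (i : ℕ) < l.length := h
    simp only [List.get_eq_getElem]
    exact List.getElem_append_left this
  · intro i h
    show τ0 i ∉ l
    have hget : τ0 i = L.get (Fin.cast hLlen.symm i) := rfl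
    rw [hget]
    have hflen : l.length + ((List.finRange n).filter (fun x => decide (x ∉ l))).length = n := by
      have h2 := hLlen
      rw [hLdef, List.length_append] at h2
      exact h2
    have hidx : (i : ℕ) - l.length <
        ((List.finRange n).filter (fun x => decide (x ∉ l))).length := by
      have := i.isLt; omega
    simp only [List.get_eq_getElem, Fin.coe_cast, hLdef]
    rw [List.getElem_append_right h]
    exact of_decide_eq_true (List.mem_filter.mp (List.getElem_mem hidx)).2
lemma def_lemma (ε : ℝ) (R : (Fin n → M) → Bool) {ℓg : ℕ}
    (l : List (Fin n)) (hnd : l.Nodup) (hlen : l.length ≤ ℓg)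
    (B : Fin n → Arg M)
    (hgood : ∀ j ∈ l, (B j).isRight = true ∧ IsGood ε R ℓg (B j))
    (helem : ∀ j, j ∉ l → (B j).isLeft = true) :
    pollAux ε R l B ≠ TV.up := by
  by_cases hl0 : l = []
  · subst hl0
    have hex : ∃ f : Fin n → M, ∀ i, B i = Sum.inl (f i) := by
      have h : ∀ i, ∃ a, B i = Sum.inl a := fun i =>
        Sum.isLeft_iff.mp (helem i (by simp))
      exact ⟨fun i => (h i).choose, fun i => (h i).choose_spec⟩
    rw [pollAux, dif_pos hex]
    split <;> simp
  · obtain ⟨m, hm⟩ : ∃ m, l.length = m + 1 :=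
      ⟨l.length - 1, by cases l with | nil => exact absurd rfl hl0 | cons a t => simp⟩
    obtain ⟨mg, rfl⟩ : ∃ mg, ℓg = mg + 1 := ⟨ℓg - 1, by omega⟩
    obtain ⟨τ, hτ1, hτ2⟩ := exists_perm l hnd
    have hlln : l.length ≤ n := by
      have := List.Nodup.length_le_card hnd
      simpa using this
    have h0lt : 0 < l.length := by omega
    have hlist : ((List.finRange n).take l.length).map τ.symm = l := by
      apply List.ext_getElem
      · simp [hlln]
      · intro t h1 h2
        simp only [List.getElem_map, List.getElem_take, List.getElem_finRange]
        have ht : t < l.length := by simpa [hlln] using h1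
        have := hτ1 ⟨t, by omega⟩ (by simpa using ht)
        simpa using this
    set A' : Fin n → Arg M := fun i => B (τ.symm i) with hA'
    have hBA : (fun i => A' (τ i)) = B := by
      funext i; simp [hA']
    have hg' : IsGood ε R (m + 1) (B (l.get ⟨0, h0lt⟩)) := by
      have hg := (hgood (l.get ⟨0, h0lt⟩) (l.get_mem _)).2
      exact isGood_mono ε R _ (by omega) (by omega) hg
    rw [IsGood] at hg'
    have hres := hg'.2 A' τ ?_ ?_ ?_
    · rw [pollValue, hBA, ← hm, hlist] at hres
      exact hres
    · intro i hi
      show B (τ.symm i) = _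
      rw [hτ1 i (by omega)]
      exact congrArg _ (congrArg _ (Fin.ext (by simp [hi])))
    · intro i hi1 hi2
      have hilt : (i : ℕ) < l.length := by omega
      have he : A' i = B (l.get ⟨(i : ℕ), hilt⟩) := by
        show B (τ.symm i) = _
        rw [hτ1 i hilt]
      rw [he]
      refine ⟨(hgood (l.get ⟨(i : ℕ), hilt⟩) (l.get_mem _)).1, ?_⟩
      exact isGood_mono ε R _ (by omega) (by omega) (hgood (l.get ⟨(i : ℕ), hilt⟩) (l.get_mem _)).2
    · intro i hi
      show (B (τ.symm i)).isLeft = true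
      exact helem _ (hτ2 i (by omega))
lemma perm_lemma (ε : ℝ) (hε0 : 0 < ε) (hε : ε < 1/4) (R : (Fin n → M) → Bool)
    {ℓg : ℕ} {l₁ l₂ : List (Fin n)} (hp : l₁.Perm l₂) :
    ∀ B : Fin n → Arg M, l₁.Nodup → l₁.length ≤ ℓg →
      (∀ j ∈ l₁, (B j).isRight = true ∧ IsGood ε R ℓg (B j)) →
      (∀ j, j ∉ l₁ → (B j).isLeft = true) →
      pollAux ε R l₁ B = pollAux ε R l₂ B := by
  induction hp with
  | nil => intro B _ _ _ _; rfl
  | cons x hp' ih =>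
    rename_i t₁ t₂
    intro B hnd hlen hgood helem
    have hxnot : x ∉ t₁ := (List.nodup_cons.mp hnd).1
    have hinner : ∀ a : M, pollAux ε R t₁ (Function.update B x (Sum.inl a)) =
        pollAux ε R t₂ (Function.update B x (Sum.inl a)) := by
      intro a
      refine ih _ (List.nodup_cons.mp hnd).2 (by simp at hlen ⊢; omega) ?_ ?_
      · intro j hj
        have hjx : j ≠ x := fun h => hxnot (h ▸ hj)
        rw [Function.update_of_ne hjx]
        exact hgood j (List.mem_cons_of_mem x hj)
      · intro j hj
        by_cases hjx : j = x
        · subst hjx; simp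
        · rw [Function.update_of_ne hjx]
          exact helem j (by simp [hjx, hj])
    rw [pollAux, pollAux]
    rcases hBx : B x with a | Bx
    · rfl
    · dsimp only
      simp only [hinner]
  | swap x y t =>
    intro B hnd hlen hgood helem
    have h1 := List.nodup_cons.mp hnd
    have h2 := List.nodup_cons.mp h1.2
    have hyx : y ≠ x := fun h => h1.1 (by rw [h]; exact List.mem_cons_self)
    have hnd' : (x :: y :: t).Nodup := by
      refine List.nodup_cons.mpr ⟨?_, List.nodup_cons.mpr ⟨?_, h2.2⟩⟩
      · intro hx
        rcases List.mem_cons.mp hx with h | h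
        · exact hyx h.symm
        · exact h2.1 h
      · exact fun h => h1.1 (List.mem_cons_of_mem x h)
    have hmem : ∀ j, j ∈ y :: x :: t ↔ j ∈ x :: y :: t := by
      intro j; simp only [List.mem_cons]; tauto
    have hd1 : pollAux ε R (y :: x :: t) B ≠ TV.up :=
      def_lemma ε R _ hnd hlen B hgood helem
    have hd2 : pollAux ε R (x :: y :: t) B ≠ TV.up := by
      refine def_lemma ε R _ hnd' (by simpa using hlen) B ?_ ?_
      · intro j hj; exact hgood j ((hmem j).mpr hj)
      · intro j hj; exact helem j (fun h => hj ((hmem j).mp h))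
    exact swap_lemma ε hε0 hε R y x hyx t B hd1 hd2
  | trans hp1 hp2 ih1 ih2 =>
    rename_i l₁ l₂ l₃
    intro B hnd hlen hgood helem
    rw [ih1 B hnd hlen hgood helem]
    refine ih2 B (hp1.nodup_iff.mp hnd) (hp1.length_eq ▸ hlen) ?_ ?_
    · intro j hj; exact hgood j (hp1.mem_iff.mpr hj)
    · intro j hj; exact helem j (fun h => hj (hp1.mem_iff.mp h))

end AuxLemmas

/-- Proposition: the order of unraveling does not matter.
If `A_0, …, A_{ℓ-1}` are `(ε,ℓ,E)`-good sets and `A_ℓ, …, A_{n-1}` are elements, then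
for any injections `β₀ β₁ : {0,…,ℓ-1} → {0,…,ℓ-1}` and any permutation `σ` of `{0,…,n-1}`,
`Ê^{σ∘β₀}_ε (A_{σ(0)},…,A_{σ(n-1)}) = Ê^{σ∘β₁}_ε (A_{σ(0)},…,A_{σ(n-1)}) ∈ {⊤,⊥}`. -/
theorem statement0 {L : RelLanguage} {M : Type} [Fintype M] [DecidableEq M]
    (𝓜 : RelStructure L M) (E : L.Symb)
    (ε : ℝ) (hε0 : 0 < ε) (hε : ε < 1 / 4)
    (ℓ : ℕ) (hℓ1 : 1 ≤ ℓ) (hℓn : ℓ ≤ L.arity E)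
    (A : Fin (L.arity E) → Arg M)
    (hsets : ∀ i : Fin (L.arity E), (i : ℕ) < ℓ →
        (A i).isRight = true ∧ IsGood ε (𝓜.rel E) ℓ (A i))
    (helems : ∀ i : Fin (L.arity E), ℓ ≤ (i : ℕ) → (A i).isLeft = true)
    (β₀ β₁ : Fin ℓ → Fin ℓ) (hβ₀ : Function.Injective β₀) (hβ₁ : Function.Injective β₁)
    (σ : Equiv.Perm (Fin (L.arity E))) :
    partialRel ε (𝓜.rel E)
        ((List.finRange ℓ).map fun t => σ.symm (Fin.castLE hℓn (β₀ t)))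
        (fun i => A (σ i)) =
      partialRel ε (𝓜.rel E)
        ((List.finRange ℓ).map fun t => σ.symm (Fin.castLE hℓn (β₁ t)))
        (fun i => A (σ i)) ∧
    partialRel ε (𝓜.rel E)
        ((List.finRange ℓ).map fun t => σ.symm (Fin.castLE hℓn (β₀ t)))
        (fun i => A (σ i)) ≠ TV.up := by
  classical
  set R := 𝓜.rel E with hR
  set B : Fin (L.arity E) → Arg M := fun i => A (σ i) with hBdef
  have hginj : ∀ β : Fin ℓ → Fin ℓ, Function.Injective β →
      Function.Injective (fun t => σ.symm (Fin.castLE hℓn (β t))) := by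
    intro β hβ a b hab
    simp only at hab
    exact hβ (Fin.castLE_injective hℓn (σ.symm.injective hab))
  have hmem : ∀ β : Fin ℓ → Fin ℓ, Function.Injective β → ∀ i : Fin (L.arity E),
      (i ∈ ((List.finRange ℓ).map fun t => σ.symm (Fin.castLE hℓn (β t))) ↔
        (σ i : ℕ) < ℓ) := by
    intro β hβ i
    constructor
    · intro hi
      obtain ⟨t, -, ht⟩ := List.mem_map.mp hi
      have h2 : σ i = Fin.castLE hℓn (β t) := by rw [← ht]; simp
      rw [h2]
      simpa using (β t).isLt
    · intro hi
      obtain ⟨t, ht⟩ := Finite.surjective_of_injective hβ ⟨(σ i : ℕ), hi⟩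
      refine List.mem_map.mpr ⟨t, List.mem_finRange t, ?_⟩
      rw [ht]
      have h2 : Fin.castLE hℓn (⟨(σ i : ℕ), hi⟩ : Fin ℓ) = σ i := Fin.ext rfl
      rw [h2]
      simp
  have hhyps : ∀ β : Fin ℓ → Fin ℓ, (hβ : Function.Injective β) →
      (((List.finRange ℓ).map fun t => σ.symm (Fin.castLE hℓn (β t))).reverse.Nodup ∧
       ((List.finRange ℓ).map fun t => σ.symm (Fin.castLE hℓn (β t))).reverse.length ≤ ℓ ∧
       (∀ j ∈ ((List.finRange ℓ).map fun t => σ.symm (Fin.castLE hℓn (β t))).reverse,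
          (B j).isRight = true ∧ IsGood ε R ℓ (B j)) ∧
       (∀ j, j ∉ ((List.finRange ℓ).map fun t => σ.symm (Fin.castLE hℓn (β t))).reverse →
          (B j).isLeft = true)) := by
    intro β hβ
    refine ⟨List.nodup_reverse.mpr ((List.nodup_finRange ℓ).map (hginj β hβ)), by simp, ?_, ?_⟩
    · intro j hj
      have hjℓ : (σ j : ℕ) < ℓ := (hmem β hβ j).mp (List.mem_reverse.mp hj)
      exact hsets (σ j) hjℓ
    · intro j hj
      have hjℓ : ¬ (σ j : ℕ) < ℓ := fun h =>
        hj (List.mem_reverse.mpr ((hmem β hβ j).mpr h))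
      exact helems (σ j) (by omega)
  obtain ⟨hnd0, hlen0, hgood0, helem0⟩ := hhyps β₀ hβ₀
  obtain ⟨hnd1, hlen1, hgood1, helem1⟩ := hhyps β₁ hβ₁
  have hperm : (((List.finRange ℓ).map fun t => σ.symm (Fin.castLE hℓn (β₀ t))).reverse).Perm
      (((List.finRange ℓ).map fun t => σ.symm (Fin.castLE hℓn (β₁ t))).reverse) := by
    refine (List.perm_ext_iff_of_nodup hnd0 hnd1).mpr ?_
    intro a
    rw [List.mem_reverse, List.mem_reverse, hmem β₀ hβ₀ a, hmem β₁ hβ₁ a]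
  constructor
  · rw [partialRel, partialRel]
    exact perm_lemma ε hε0 hε R hperm B hnd0 hlen0 hgood0 helem0
  · rw [partialRel]
    exact def_lemma ε R _ hnd0 hlen0 B hgood0 helem0
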